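/- Let Γ be a weighted forest and let Γ' be obtained from Γ by blowing up a vertex P: add a new vertex R of weight -1 joined by an edge to P, and decrease the weight of P by 1. Then d(Γ') = d(Γ). -/

import Mathlib

open Classical Finset

/-- The matrix `Q(Γ)` of a weighted graph: `-a i` on the diagonal, `-1` for
adjacent vertices, `0` otherwise. -/
noncomputable def wMatrix {V : Type*} [Fintype V] (G : SimpleGraph V) (a : V → ℤ) :
    Matrix V V ℤ :=
  Matrix.of fun i j => if i = j then -a i else if G.Adj i j then (-1 : ℤ) else 0

/-- The determinant `d(Γ)` of a weighted graph. -/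
noncomputable def wDet {V : Type*} [Fintype V] (G : SimpleGraph V) (a : V → ℤ) : ℤ :=
  (wMatrix G a).det

/-- The determinant of the weighted graph obtained by deleting a set `s` of
vertices (and all incident edges). -/
noncomputable def wDetDel {V : Type*} [Fintype V] (G : SimpleGraph V) (a : V → ℤ)
    (s : Set V) : ℤ :=
  wDet (SimpleGraph.comap (Subtype.val : {v // v ∉ s} → V) G) (fun v => a v.1)

/-- The blow-up of a weighted graph at a vertex `P`: a new vertex `R` (of weight
`-1`) is attached to `P`, and the weight of `P` drops by `1`. -/
def blowupVertexGraph {V : Type*} (G : SimpleGraph V) (P : V) :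
    SimpleGraph (V ⊕ Unit) where
  Adj x y :=
    match x, y with
    | Sum.inl u, Sum.inl v => G.Adj u v
    | Sum.inl u, Sum.inr _ => u = P
    | Sum.inr _, Sum.inl v => v = P
    | Sum.inr _, Sum.inr _ => False
  symm := ⟨by
    rintro (u | u) (v | v) h
    · exact G.adj_symm h
    · exact h
    · exact h
    · exact h.elim⟩
  loopless := ⟨by
    rintro (u | u) h
    · exact G.irrefl h
    · exact h.elim⟩

/-- The weights after blowing up the vertex `P`: the new vertex `R` gets weight
`-1`, the weight of `P` drops by `1`. -/
noncomputable def blowupVertexWeights {V : Type*} [DecidableEq V] (a : V → ℤ) (P : V) :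
    V ⊕ Unit → ℤ :=
  Sum.elim (Function.update a P (a P - 1)) (fun _ => (-1 : ℤ))

/-- Lemma 5.6, Case 1: the determinant of a weighted forest is preserved by
blowing up a vertex. -/
theorem forest_det_blowup_vertex {V : Type*} [Fintype V] [DecidableEq V]
    (G : SimpleGraph V) (hG : G.IsAcyclic) (a : V → ℤ) (P : V) :
    wDet (blowupVertexGraph G P) (blowupVertexWeights a P) = wDet G a := by
  unfold wDet
  set A : Matrix V V ℤ := wMatrix G (Function.update a P (a P - 1)) with hA
  set B : Matrix V Unit ℤ := Matrix.of fun i (_ : Unit) => if i = P then (-1 : ℤ) else 0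
    with hB
  set C : Matrix Unit V ℤ := Matrix.of fun (_ : Unit) j => if j = P then (-1 : ℤ) else 0
    with hC
  have h : wMatrix (blowupVertexGraph G P) (blowupVertexWeights a P)
      = Matrix.fromBlocks A B C 1 := by
    ext x y
    rcases x with u | u <;> rcases y with v | v <;>
      simp [hA, hB, hC, wMatrix, blowupVertexGraph, blowupVertexWeights, Matrix.fromBlocks,
        Matrix.one_apply, -Sum.elim_update_left] <;> split_ifs <;> simp_all
  have hM : A - B * C = wMatrix G a := by
    ext i j
    simp only [hA, hB, hC, Matrix.sub_apply, Matrix.mul_apply, Fintype.univ_punit,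
      sum_singleton, Matrix.of_apply, wMatrix]
    rcases eq_or_ne i j with rfl | hij
    · rcases eq_or_ne i P with rfl | hP
      · simp [Function.update_self]
      · simp [Function.update_of_ne hP, hP]
    · simp only [if_neg hij]
      split_ifs with h1 h2 h2 <;> simp_all
  rw [h]
  trans (A - B * C).det
  · convert Matrix.det_fromBlocks_one₂₂ A B C using 2
  · rw [hM]; congr!
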